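/- Let h : ℝⁿ → ℝ be C¹ along a C¹ trajectory x(t), let Γ be a locally Lipschitz class K function, and define ψ₁(t) = (d/dt) h(x(t)) + Γ(h(x(t))). If h(x(0)) ≥ 0 and ψ₁(t) ≥ 0 for all t ≥ 0, then h(x(t)) ≥ 0 for all t ≥ 0. -/

import Mathlib

/-- Induction step of the HOCBF invariance proof: if `ψ₁ = ḣ + Γ(h) ≥ 0` along
a trajectory with `h(x(0)) ≥ 0` and `Γ` a locally Lipschitz class K function,
then `h(x(t)) ≥ 0` for all `t ≥ 0`. -/
theorem hocbf_induction_step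
    (n : ℕ) (h : (Fin n → ℝ) → ℝ) (x : ℝ → (Fin n → ℝ))
    (hh : ContDiff ℝ 1 h) (hx : ContDiff ℝ 1 x)
    (Γ : ℝ → ℝ) (hΓlip : LocallyLipschitz Γ)
    (hΓmono : StrictMonoOn Γ (Set.Ici (0 : ℝ))) (hΓ0 : Γ 0 = 0)
    (ψ₁ : ℝ → ℝ)
    (hψ₁ : ∀ t, ψ₁ t = deriv (fun s => h (x s)) t + Γ (h (x t)))
    (h0 : 0 ≤ h (x 0))
    (hψ₁nonneg : ∀ t, 0 ≤ t → 0 ≤ ψ₁ t) :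
    ∀ t, 0 ≤ t → 0 ≤ h (x t) := by
  set g : ℝ → ℝ := fun s => h (x s) with hg_def
  have hgdiff : Differentiable ℝ g :=
    (hh.differentiable one_ne_zero).comp (hx.differentiable one_ne_zero)
  have hgc : Continuous g := hgdiff.continuous
  by_contra hcon
  push_neg at hcon
  obtain ⟨t₁, ht₁0, hneg⟩ := hcon
  -- the derivative inequality
  have hderiv : ∀ t, 0 ≤ t → -Γ (g t) ≤ deriv g t := by
    intro t ht
    have := hψ₁nonneg t ht
    rw [hψ₁ t] at this
    linarith
  -- set of zeros of g in [0, t₁]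
  set S : Set ℝ := {t | t ∈ Set.Icc (0:ℝ) t₁ ∧ g t = 0} with hS_def
  have hScomp : IsCompact S := by
    have hclosed : IsClosed S :=
      (isClosed_Icc.inter (isClosed_eq hgc continuous_const) : IsClosed
        (Set.Icc (0:ℝ) t₁ ∩ {t | g t = 0}))
    exact (isCompact_Icc.of_isClosed_subset hclosed fun t ht => ht.1)
  have hSne : S.Nonempty := by
    have hsub : Set.Icc (g t₁) (g 0) ⊆ g '' Set.Icc 0 t₁ :=
      intermediate_value_Icc' ht₁0 hgc.continuousOn
    have : (0:ℝ) ∈ Set.Icc (g t₁) (g 0) := ⟨le_of_lt hneg, h0⟩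
    obtain ⟨z, hz, hgz⟩ := hsub this
    exact ⟨z, hz, hgz⟩
  set τ : ℝ := sSup S with hτ_def
  have hτS : τ ∈ S := hScomp.sSup_mem hSne
  have hτIcc : τ ∈ Set.Icc (0:ℝ) t₁ := hτS.1
  have hgτ : g τ = 0 := hτS.2
  have hτlt : τ < t₁ := by
    rcases lt_or_eq_of_le hτIcc.2 with hlt | heq
    · exact hlt
    · rw [heq] at hgτ; linarith
  -- everything strictly after τ (up to t₁) is negative
  have hnegafter : ∀ s, τ < s → s ≤ t₁ → g s < 0 := by
    intro s hs hst
    by_contra hge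
    push_neg at hge
    have hsub : Set.Icc (g t₁) (g s) ⊆ g '' Set.Icc s t₁ :=
      intermediate_value_Icc' hst hgc.continuousOn
    have : (0:ℝ) ∈ Set.Icc (g t₁) (g s) := ⟨le_of_lt hneg, hge⟩
    obtain ⟨z, hz, hgz⟩ := hsub this
    have hzS : z ∈ S := ⟨⟨le_trans (le_trans hτIcc.1 hs.le) hz.1, hz.2⟩, hgz⟩
    have : z ≤ τ := le_csSup hScomp.bddAbove hzS
    linarith [hz.1]
  -- Lipschitz constant near 0
  obtain ⟨K, s, hs, hlip⟩ := hΓlip 0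
  obtain ⟨ε, hε, hball⟩ := Metric.mem_nhds_iff.mp hs
  have h0s : (0:ℝ) ∈ s := hball (Metric.mem_ball_self hε)
  -- choose t₂ close to τ
  have hcont : ContinuousAt g τ := hgc.continuousAt
  have : ∀ᶠ t in nhds τ, |g t| < ε := by
    have := hcont.eventually (Metric.ball_mem_nhds (g τ) hε)
    filter_upwards [this] with t ht
    rw [hgτ] at ht
    simpa [Real.dist_eq] using ht
  obtain ⟨δ, hδ, hδball⟩ := Metric.eventually_nhds_iff.mp this
  set t₂ : ℝ := min t₁ (τ + δ / 2) with ht₂_def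
  have hτt₂ : τ < t₂ := lt_min hτlt (by linarith)
  have ht₂t₁ : t₂ ≤ t₁ := min_le_left _ _
  have hsmall : ∀ t, t ∈ Set.Icc τ t₂ → |g t| < ε := by
    intro t ht
    apply hδball
    have h1 : t ≤ τ + δ / 2 := le_trans ht.2 (min_le_right _ _)
    rw [Real.dist_eq]
    rw [abs_lt]
    constructor <;> [linarith [ht.2, ht.1]; linarith [ht.1]]
  -- the auxiliary function f
  set f : ℝ → ℝ := fun t => g t * Real.exp (-(K:ℝ) * t) with hf_def
  have hfderiv : ∀ t, HasDerivAt f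
      (deriv g t * Real.exp (-(K:ℝ) * t) + g t * (Real.exp (-(K:ℝ) * t) * (-(K:ℝ)))) t := by
    intro t
    have h1 : HasDerivAt (fun t : ℝ => -(K:ℝ) * t) (-(K:ℝ)) t := by
      simpa using (hasDerivAt_id t).const_mul (-(K:ℝ))
    exact (hgdiff t).hasDerivAt.mul h1.exp
  have hfmono : MonotoneOn f (Set.Icc τ t₂) := by
    apply monotoneOn_of_deriv_nonneg (convex_Icc τ t₂)
    · exact (hgc.mul (Real.continuous_exp.comp (by continuity))).continuousOn
    · intro t ht
      exact ((hgdiff t).hasDerivAt.mul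
        ((by simpa using (hasDerivAt_id t).const_mul (-(K:ℝ))
          : HasDerivAt (fun t : ℝ => -(K:ℝ) * t) (-(K:ℝ)) t).exp)).differentiableAt.differentiableWithinAt
    · intro t ht
      rw [interior_Icc] at ht
      rw [(hfderiv t).deriv]
      have htIcc : t ∈ Set.Icc τ t₂ := ⟨ht.1.le, ht.2.le⟩
      have hgt_neg : g t < 0 := hnegafter t ht.1 (le_trans ht.2.le ht₂t₁)
      have hgt_mem : g t ∈ s := by
        apply hball
        simpa [Real.dist_eq] using hsmall t htIcc
      have hΓbound : Γ (g t) ≤ (K:ℝ) * |g t| := by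
        have := hlip.dist_le_mul (g t) hgt_mem 0 h0s
        rw [hΓ0, Real.dist_eq, Real.dist_eq, sub_zero, sub_zero] at this
        calc Γ (g t) ≤ |Γ (g t)| := le_abs_self _
          _ ≤ (K:ℝ) * |g t| := this
      have habs : |g t| = -g t := abs_of_neg hgt_neg
      have ht0 : (0:ℝ) ≤ t := le_trans hτIcc.1 ht.1.le
      have hd := hderiv t ht0
      have hkey : (K:ℝ) * g t ≤ deriv g t := by
        rw [habs] at hΓbound
        linarith
      have hexp : (0:ℝ) < Real.exp (-(K:ℝ) * t) := Real.exp_pos _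
      nlinarith
  have hfτ : f τ = 0 := by simp [hf_def, hgτ]
  have hft₂ : 0 ≤ f t₂ := by
    have := hfmono (Set.left_mem_Icc.mpr hτt₂.le) (Set.right_mem_Icc.mpr hτt₂.le) hτt₂.le
    rw [hfτ] at this
    exact this
  have hgt₂ : g t₂ < 0 := hnegafter t₂ hτt₂ ht₂t₁
  have hexp : (0:ℝ) < Real.exp (-(K:ℝ) * t₂) := Real.exp_pos _
  have hft₂' : 0 ≤ g t₂ * Real.exp (-(K:ℝ) * t₂) := hft₂
  nlinarith [hft₂']
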